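/- Let $\{\phi_t\}_{t=1}^\infty$ be a sequence in $\mathbb{R}^d$, let $\Lambda_0 \in \mathbb{R}^{d\times d}$ be positive definite, and set $\Lambda_t = \Lambda_0 + \sum_{j=1}^{t-1}\phi_j\phi_j^\top$. Then for any $t \ge 1$, $\sum_{j=1}^t \min\{1, \phi_j^\top \Lambda_j^{-1}\phi_j\} \le 2\log\left(\det(\Lambda_{t+1})/\det(\Lambda_1)\right)$. -/

import Mathlib

open Matrix

lemma vecMulVec_posSemidef {d : ℕ} (u : Fin d → ℝ) :
    (vecMulVec u u).PosSemidef := by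
  have h := Matrix.posSemidef_conjTranspose_mul_self (Matrix.replicateRow (Fin 1) u)
  convert h using 1
  rw [vecMulVec_eq (Fin 1), Matrix.conjTranspose_replicateRow]
  simp
  exact rfl

lemma min_le_two_log {x : ℝ} (hx : 0 ≤ x) : min 1 x ≤ 2 * Real.log (1 + x) := by
  rcases le_total x 1 with h | h
  · rw [min_eq_right h]
    have h1 : (0:ℝ) < 1 + x := by linarith
    have := Real.one_sub_inv_le_log_of_pos h1
    have hinv : 1 - (1 + x)⁻¹ = x / (1 + x) := by
      field_simp
      ring
    rw [hinv] at this
    have : x / 2 ≤ Real.log (1 + x) := by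
      refine le_trans ?_ this
      rw [div_le_div_iff₀ (by norm_num) h1]
      nlinarith
    linarith
  · rw [min_eq_left h]
    have h2 : Real.log 2 ≤ Real.log (1 + x) :=
      Real.log_le_log (by norm_num) (by linarith)
    have := Real.log_two_gt_d9
    linarith


/-- Elliptical potential lemma. -/
theorem stmt1 {d : ℕ} (φ : ℕ → Fin d → ℝ) (Λ₀ : Matrix (Fin d) (Fin d) ℝ)
    (hΛ₀ : Λ₀.PosDef)
    (Λ : ℕ → Matrix (Fin d) (Fin d) ℝ)
    (hΛ : ∀ t, Λ t = Λ₀ + ∑ j ∈ Finset.Ico 1 t, vecMulVec (φ j) (φ j)) :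
    ∀ t : ℕ, 1 ≤ t →
      ∑ j ∈ Finset.Icc 1 t, min 1 (φ j ⬝ᵥ ((Λ j)⁻¹ *ᵥ φ j))
        ≤ 2 * Real.log ((Λ (t + 1)).det / (Λ 1).det) := by
  -- positive definiteness of each Λ t
  have hpos : ∀ t, (Λ t).PosDef := by
    intro t
    rw [hΛ t]
    refine Matrix.PosDef.add_posSemidef hΛ₀ ?_
    refine Finset.sum_induction (fun j => vecMulVec (φ j) (φ j))
      (fun M => M.PosSemidef) (fun a b ha hb => ha.add hb) Matrix.PosSemidef.zero ?_
    exact fun j _ => vecMulVec_posSemidef (φ j)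
  -- quadratic forms are nonneg
  have hx : ∀ j, 0 ≤ φ j ⬝ᵥ ((Λ j)⁻¹ *ᵥ φ j) := by
    intro j
    have h := ((hpos j).inv).posSemidef.re_dotProduct_nonneg (𝕜 := ℝ) (φ j)
    simpa using h
  -- recursion: Λ (j+1) = Λ j + φ j φ jᵀ for j ≥ 1
  have hrec : ∀ j, 1 ≤ j → Λ (j + 1) = Λ j + vecMulVec (φ j) (φ j) := by
    intro j hj
    rw [hΛ (j + 1), hΛ j, Finset.sum_Ico_succ_top hj, add_assoc]
  -- determinant lemma
  have hdet : ∀ j, 1 ≤ j →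
      (Λ (j + 1)).det = (Λ j).det * (1 + φ j ⬝ᵥ ((Λ j)⁻¹ *ᵥ φ j)) := by
    intro j hj
    have hU : IsUnit (Λ j).det := (hpos j).det_pos.ne'.isUnit
    rw [hrec j hj, vecMulVec_eq (Fin 1)]
    have hcancel : Λ j + replicateCol (Fin 1) (φ j) * replicateRow (Fin 1) (φ j)
        = Λ j * (1 + (Λ j)⁻¹ * replicateCol (Fin 1) (φ j) * replicateRow (Fin 1) (φ j)) := by
      rw [Matrix.mul_add, Matrix.mul_one]
      congr 1
      rw [← Matrix.mul_assoc, ← Matrix.mul_assoc, Matrix.mul_nonsing_inv _ hU,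
        Matrix.one_mul]
    erw [hcancel, Matrix.det_mul]
    congr 1
    rw [← Matrix.replicateCol_mulVec]
    erw [Matrix.det_one_add_replicateCol_mul_replicateRow]
  intro t ht
  have hdpos : ∀ s, 0 < (Λ s).det := fun s => (hpos s).det_pos
  have hq : ∀ j, 1 ≤ j →
      (Λ (j + 1)).det / (Λ 1).det
      = ((Λ j).det / (Λ 1).det) * (1 + φ j ⬝ᵥ ((Λ j)⁻¹ *ᵥ φ j)) := by
    intro j hj
    rw [hdet j hj, mul_div_right_comm]
  induction' t, ht using Nat.le_induction with t ht ih
  · simp only [Finset.Icc_self, Finset.sum_singleton]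
    rw [hq 1 le_rfl, div_self (hdpos 1).ne', one_mul, Real.log]
    exact min_le_two_log (hx 1)
  · rw [Finset.sum_Icc_succ_top (by omega : 1 ≤ t + 1)]
    have h1x : (0:ℝ) < 1 + φ (t+1) ⬝ᵥ ((Λ (t+1))⁻¹ *ᵥ φ (t+1)) := by
      have := hx (t+1); linarith
    have hdiv : (0:ℝ) < (Λ (t+1)).det / (Λ 1).det :=
      div_pos (hdpos (t+1)) (hdpos 1)
    have key : Real.log ((Λ (t + 1 + 1)).det / (Λ 1).det)
        = Real.log ((Λ (t + 1)).det / (Λ 1).det)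
          + Real.log (1 + φ (t+1) ⬝ᵥ ((Λ (t+1))⁻¹ *ᵥ φ (t+1))) := by
      rw [hq (t+1) (by omega), Real.log_mul hdiv.ne' h1x.ne']
    have h2 := min_le_two_log (hx (t+1))
    rw [key]
    linarith [ih]
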